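/- Let 𝒜 be a weak deterministic Büchi automaton over a finite alphabet A, and call a state recurrent if it is accessible from itself by a nonempty word. Then Q_∅ = {q ∈ Q : L(𝒜_q) = ∅} is the greatest subset of Q, with respect to inclusion, among the subsets S of Q satisfying: S contains no recurrent accepting state, and δ(q,a) ∈ S for every q ∈ S and every letter a ∈ A. That is, Q_∅ satisfies both properties, and every subset of Q satisfying both properties is contained in Q_∅. -/
import Mathlib


/-- A deterministic Büchi automaton over alphabet `A` with states `Q`. -/
structure DBA (A : Type) (Q : Type) where
  delta : Q → A → Q
  init : Q
  F : Set Q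

namespace DBA

variable {A Q : Type}

/-- The transition function extended to finite words. -/
def deltaStar (M : DBA A Q) : Q → List A → Q
  | q, [] => q
  | q, a :: u => deltaStar M (M.delta q a) u

/-- The run of `M` on the infinite word `w`. -/
def run (M : DBA A Q) (w : ℕ → A) : ℕ → Q
  | 0 => M.init
  | n + 1 => M.delta (run M w n) (w n)

/-- `M` accepts `w` if some accepting state occurs infinitely often in the run. -/
def Accepts (M : DBA A Q) (w : ℕ → A) : Prop :=
  ∃ q ∈ M.F, ∀ N : ℕ, ∃ n, N ≤ n ∧ run M w n = q

/-- The ω-language of `M`. -/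
def Lang (M : DBA A Q) : Set (ℕ → A) := {w | M.Accepts w}

/-- `M` with initial state changed to `q`. -/
def start (M : DBA A Q) (q : Q) : DBA A Q := { M with init := q }

/-- `q'` is accessible from `q` (by a nonempty word). -/
def Reach (M : DBA A Q) (q q' : Q) : Prop :=
  ∃ u : List A, u ≠ [] ∧ deltaStar M q u = q'

/-- `M` is weak: `F` is a union of strongly connected components. -/
def Weak (M : DBA A Q) : Prop :=
  ∀ q ∈ M.F, ∀ q', M.Reach q q' → M.Reach q' q → q' ∈ M.F

/-- `M` is minimal: distinct states recognize distinct languages. -/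
def Minimal (M : DBA A Q) : Prop :=
  ∀ q q' : Q, q ≠ q' → (M.start q).Lang ≠ (M.start q').Lang

end DBA

/-- Concatenation of a finite word and an infinite word. -/
def cat {A : Type} (u : List A) (w : ℕ → A) : ℕ → A :=
  fun n => if h : n < u.length then u.get ⟨n, h⟩ else w (n - u.length)

/-- The value `⟨v⟩ = Σ_{i<|v|} v[i]·b^(|v|-1-i)` of a finite digit word. -/
noncomputable def natVal (b : ℕ) (v : List (Fin b)) : ℝ :=
  ∑ i : Fin v.length, ((v.get i : ℕ) : ℝ) * (b : ℝ) ^ (v.length - 1 - (i : ℕ))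

/-- The fractional value `⟨w⟩_f = Σ_{i≥0} w[i]·b^(-i-1)` of an infinite digit word. -/
noncomputable def fracVal (b : ℕ) (w : ℕ → Fin b) : ℝ :=
  ∑' i : ℕ, ((w i : ℕ) : ℝ) * (b : ℝ) ^ (-(i : ℤ) - 1)

/-- The word `𝐮⋆𝐰` over `Σ^d ∪ {⋆}`; `none` is the separator `⋆`. -/
def encWord {b d : ℕ} (u : List (Fin d → Fin b)) (w : ℕ → Fin d → Fin b) :
    ℕ → Option (Fin d → Fin b) :=
  cat (u.map some ++ [none]) (fun n => some (w n))

/-- The vector of reals encoded by `𝐮⋆𝐰`. -/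
noncomputable def vecVal {b d : ℕ} (u : List (Fin d → Fin b)) (w : ℕ → Fin d → Fin b) :
    Fin d → ℝ :=
  fun i => natVal b (u.map fun t => t i) + fracVal b (fun n => w n i)

/-- A language of words over `Σ^d ∪ {⋆}` is saturated if membership only depends on
the encoded vector of reals. -/
def Saturated {b d : ℕ} (L : Set (ℕ → Option (Fin d → Fin b))) : Prop :=
  ∀ (u : List (Fin d → Fin b)) (w : ℕ → Fin d → Fin b)
    (u' : List (Fin d → Fin b)) (w' : ℕ → Fin d → Fin b),
    vecVal u w = vecVal u' w' → encWord u w ∈ L → encWord u' w' ∈ L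

/-- The parallelization `par(𝒜)` of an automaton over `Σ ∪ {⋆}`. -/
def parDBA {Q : Type} {b : ℕ} (d : ℕ) (M : DBA (Option (Fin b)) Q) :
    DBA (Option (Fin d → Fin b)) Q where
  delta := fun q x =>
    match x with
    | none => M.delta q none
    | some t => M.deltaStar q (List.ofFn fun i => some (t i))
  init := M.init
  F := M.F

/-- Fill the `f`-th component of a tuple of `Σ^□_f` with the digit `z`. -/
def fixTuple {b d : ℕ} (f : Fin d) (z : Fin b) (t : {i : Fin d // i ≠ f} → Fin b) :
    Fin d → Fin b :=
  fun i => if h : i = f then z else t ⟨i, h⟩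

/-- The automaton `𝒜^{z@f}` over `Σ^□_f ∪ {⋆}`; a letter of `Σ^□_f` is represented by
its tuple of non-`f` components (the `f`-th component being `□`). -/
def fixDBA {Q : Type} {b d : ℕ} (M : DBA (Option (Fin d → Fin b)) Q) (f : Fin d) (z : Fin b) :
    DBA (Option ({i : Fin d // i ≠ f} → Fin b)) Q where
  delta := fun q x =>
    match x with
    | none => M.delta q none
    | some t => M.delta q (some (fixTuple f z t))
  init := M.init
  F := M.F

/-- `fix_{□@f}(𝐰)`: replace the `f`-th component of every non-`⋆` letter by `□`. -/
def eraseComp {b d : ℕ} (f : Fin d) (w : ℕ → Option (Fin d → Fin b)) :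
    ℕ → Option ({i : Fin d // i ≠ f} → Fin b) :=
  fun n => (w n).map fun t i => t i.val

/-- `fix_{z@f}(𝐰)`: replace the `f`-th component (`□`) of every non-`⋆` letter by `z`. -/
def fillComp {b d : ℕ} (f : Fin d) (z : Fin b) (w : ℕ → Option ({i : Fin d // i ≠ f} → Fin b)) :
    ℕ → Option (Fin d → Fin b) :=
  fun n => (w n).map (fixTuple f z)

/-- The automaton `𝒜^{seq z}`, over alphabet `Σ ∪ {□,⋆}` (here `none` is `⋆` and
`some none` is `□`), with states `(Q × {0,…,d−1}) ∪ {⊥}` (`none` is `⊥`). -/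
def seqDBA {Q : Type} {b : ℕ} (d : ℕ) (hd : 0 < d) (M : DBA (Option (Fin b)) Q) (z : Fin b) :
    DBA (Option (Option (Fin b))) (Option (Q × Fin d)) where
  delta := fun s x =>
    match s, x with
    | none, _ => none
    | some (q, i), none => some (M.delta q none, i)
    | some (q, i), some (some a) =>
        if h : (i : ℕ) + 1 < d then some (M.delta q (some a), ⟨(i : ℕ) + 1, h⟩) else none
    | some (q, i), some none =>
        if (i : ℕ) = d - 1 then some (M.delta q (some z), ⟨0, hd⟩) else none
  init := some (M.init, ⟨0, hd⟩)
  F := {s | ∃ q ∈ M.F, ∃ i : Fin d, s = some (q, i)}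

/-- Auxiliary function for flattening an infinite word of blocks:
`flatAux blk v n` is the pair (block index, offset inside the block) of position `n`. -/
def flatAux {A B : Type} (blk : A → List B) (v : ℕ → A) : ℕ → ℕ × ℕ
  | 0 => (0, 0)
  | n + 1 =>
      let p := flatAux blk v n
      if p.2 + 1 < (blk (v p.1)).length then (p.1, p.2 + 1) else (p.1 + 1, 0)

/-- Flattening of an infinite word of (nonempty) blocks. -/
def flatten {A B : Type} [Inhabited B] (blk : A → List B) (v : ℕ → A) : ℕ → B :=
  fun n => (blk (v (flatAux blk v n).1)).getD (flatAux blk v n).2 default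

/-- The block of a letter of `Σ^d ∪ {⋆}`: a `d`-tuple becomes its list of components,
`⋆` stays a single letter. -/
def parBlock {b d : ℕ} : Option (Fin d → Fin b) → List (Option (Fin b))
  | none => [none]
  | some t => List.ofFn fun i => some (t i)

/-- `seq(𝐯)`: the sequentialization of an infinite word over `Σ^d ∪ {⋆}`. -/
def seqWord {b d : ℕ} (v : ℕ → Option (Fin d → Fin b)) : ℕ → Option (Fin b) :=
  flatten parBlock v

/-- The block of a letter of `Σ^□_f ∪ {⋆}`, as a word over `Σ ∪ {□,⋆}`. -/
def sqBlock {b d : ℕ} (f : Fin d) :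
    Option ({i : Fin d // i ≠ f} → Fin b) → List (Option (Option (Fin b)))
  | none => [none]
  | some t => List.ofFn fun i : Fin d =>
      if h : i = f then some none else some (some (t ⟨i, h⟩))

/-- Number of non-`⋆` letters among the first `n` letters of `w`. -/
def digitCount {b : ℕ} (w : ℕ → Option (Fin b)) : ℕ → ℕ
  | 0 => 0
  | n + 1 => digitCount w n + (if w n = none then 0 else 1)

section Aux

variable {A Q : Type}

lemma start_delta (M : DBA A Q) (q : Q) : (M.start q).delta = M.delta := rfl

lemma start_deltaStar (M : DBA A Q) (q q' : Q) (u : List A) :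
    (M.start q).deltaStar q' u = M.deltaStar q' u := by
  induction u generalizing q' with
  | nil => rfl
  | cons a u ih =>
      show (M.start q).deltaStar (M.delta q' a) u = M.deltaStar (M.delta q' a) u
      exact ih _

lemma run_add (M : DBA A Q) (w : ℕ → A) (n k : ℕ) :
    M.run w (n + k) = M.deltaStar (M.run w n) (List.ofFn fun i : Fin k => w (n + i)) := by
  induction k generalizing n with
  | zero => rfl
  | succ k ih =>
      have h1 : n + (k + 1) = (n + 1) + k := by omega
      rw [h1, ih, List.ofFn_succ]
      have hrun : M.run w (n + 1) = M.delta (M.run w n) (w n) := rfl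
      rw [hrun]
      simp only [DBA.deltaStar]
      congr 2
      funext i
      congr 1
      simp only [Fin.val_succ]
      omega

lemma run_mem_S (M : DBA A Q) (S : Set Q) (hS : ∀ q ∈ S, ∀ a : A, M.delta q a ∈ S)
    (w : ℕ → A) (hinit : M.init ∈ S) : ∀ n, M.run w n ∈ S := by
  intro n
  induction n with
  | zero => exact hinit
  | succ n ih => exact hS _ ih (w n)

end Aux

/-- `Q_∅` is the greatest set of states containing no recurrent
accepting state and closed under transitions. -/
theorem stmt16 {A Q : Type} [Fintype A] [Fintype Q] (M : DBA A Q) (hweak : M.Weak) :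
    (∀ q : Q, (M.start q).Lang = ∅ → ¬ (M.Reach q q ∧ q ∈ M.F)) ∧
    (∀ q : Q, (M.start q).Lang = ∅ → ∀ a : A, (M.start (M.delta q a)).Lang = ∅) ∧
    (∀ S : Set Q,
      (∀ q ∈ S, ¬ (M.Reach q q ∧ q ∈ M.F)) →
      (∀ q ∈ S, ∀ a : A, M.delta q a ∈ S) →
      ∀ q ∈ S, (M.start q).Lang = ∅) := by
  refine ⟨?_, ?_, ?_⟩
  · -- no recurrent accepting state has empty language
    rintro q hL ⟨⟨u, hu, hstep⟩, hF⟩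
    have hlen : 0 < u.length := List.length_pos_iff.mpr hu
    set w : ℕ → A := fun n => u.get ⟨n % u.length, Nat.mod_lt _ hlen⟩ with hw
    have hrun : ∀ j : ℕ, (M.start q).run w (j * u.length) = q := by
      intro j
      induction j with
      | zero => rw [Nat.zero_mul]; rfl
      | succ j ih =>
          have h1 : (j + 1) * u.length = j * u.length + u.length := by ring
          rw [h1, run_add, ih]
          have hseg : (List.ofFn fun i : Fin u.length => w (j * u.length + i)) = u := by
            apply List.ext_getElem
            · simp
            · intro i h1 h2
              simp only [List.getElem_ofFn, hw, List.get_eq_getElem]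
              congr 1
              have : (j * u.length + i) % u.length = i % u.length := by
                rw [Nat.add_comm, Nat.add_mul_mod_self_right]
              rw [this, Nat.mod_eq_of_lt (by simpa using h2)]
          rw [hseg, start_deltaStar, hstep]
    have : w ∈ (M.start q).Lang := by
      refine ⟨q, hF, fun N => ⟨N * u.length, ?_, hrun N⟩⟩
      calc N = N * 1 := (Nat.mul_one N).symm
        _ ≤ N * u.length := Nat.mul_le_mul_left N hlen
    rw [hL] at this
    exact this
  · -- closure under transitions
    intro q hL a
    ext w
    simp only [Set.mem_empty_iff_false, iff_false]
    rintro ⟨q', hq'F, hq'⟩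
    set w' : ℕ → A := fun n => Nat.casesOn n a w with hw'
    have hshift : ∀ n, (M.start q).run w' (n + 1) = (M.start (M.delta q a)).run w n := by
      intro n
      induction n with
      | zero => rfl
      | succ n ih =>
          show (M.start q).delta ((M.start q).run w' (n+1)) (w' (n+1))
              = (M.start (M.delta q a)).delta ((M.start (M.delta q a)).run w n) (w n)
          rw [ih]; rfl
    have : w' ∈ (M.start q).Lang := by
      refine ⟨q', hq'F, fun N => ?_⟩
      obtain ⟨n, hn, hrn⟩ := hq' N
      exact ⟨n + 1, by omega, by rw [hshift]; exact hrn⟩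
    rw [hL] at this
    exact this
  · -- greatest
    intro S hnorec hclosed q hqS
    ext w
    simp only [Set.mem_empty_iff_false, iff_false]
    rintro ⟨q', hq'F, hq'⟩
    have hmem : ∀ n, (M.start q).run w n ∈ S :=
      run_mem_S (M.start q) S (fun r hr a => hclosed r hr a) w hqS
    obtain ⟨n, _, hn⟩ := hq' 0
    obtain ⟨m, hm, hmn⟩ := hq' (n + 1)
    have hq'S : q' ∈ S := hn ▸ hmem n
    apply hnorec q' hq'S
    refine ⟨⟨List.ofFn fun i : Fin (m - n) => w (n + i), ?_, ?_⟩, hq'F⟩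
    · intro hc
      have := congrArg List.length hc
      simp at this
      omega
    · have := run_add (M.start q) w n (m - n)
      rw [hn] at this
      rw [← start_deltaStar M q, ← this]
      have : n + (m - n) = m := by omega
      rw [this, hmn]
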